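/- Let O₁, ..., O_M be Hermitian matrices on ℂ^d and ψ ∈ ℂ^d. Define the real M×M matrices S^ψ_{mn} = Re⟨O_mψ, O_nψ⟩ and A^ψ_{mn} = Im⟨O_mψ, O_nψ⟩. If A^ψ is invertible, then S^ψ is invertible. -/
import Mathlib


open Matrix Complex

/-- If the antisymmetric matrix `A^ψ_{mn} = Im⟨O_mψ, O_nψ⟩` is invertible,
then so is the symmetric matrix `S^ψ_{mn} = Re⟨O_mψ, O_nψ⟩`. -/
theorem gram_isUnit_of_symplectic_isUnit {d M : ℕ}
    (O : Fin M → Matrix (Fin d) (Fin d) ℂ) (hO : ∀ m, (O m).IsHermitian)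
    (ψ : Fin d → ℂ)
    (hA : IsUnit (Matrix.of fun m n : Fin M =>
      (star ((O m) *ᵥ ψ) ⬝ᵥ ((O n) *ᵥ ψ)).im)) :
    IsUnit (Matrix.of fun m n : Fin M =>
      (star ((O m) *ᵥ ψ) ⬝ᵥ ((O n) *ᵥ ψ)).re) := by
  classical
  by_contra hS
  set u : Fin M → Fin d → ℂ := fun m => (O m) *ᵥ ψ with hu
  have hdet : (Matrix.of fun m n : Fin M => (star (u m) ⬝ᵥ u n).re).det = 0 := by
    by_contra h
    exact hS ((Matrix.isUnit_iff_isUnit_det _).mpr (isUnit_iff_ne_zero.mpr h))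
  obtain ⟨v, hv, hv0⟩ := (Matrix.exists_mulVec_eq_zero_iff).mpr hdet
  set w : Fin d → ℂ := fun i => ∑ n, (v n : ℂ) * u n i with hw
  have key : ∀ m, star (u m) ⬝ᵥ w = ∑ n, (v n : ℂ) * (star (u m) ⬝ᵥ u n) := by
    intro m
    simp only [dotProduct, Pi.star_apply, hw, Finset.mul_sum]
    rw [Finset.sum_comm]
    exact Finset.sum_congr rfl fun n _ => Finset.sum_congr rfl fun i _ => by ring
  have hsw : star w ⬝ᵥ w = ∑ m, (v m : ℂ) * (star (u m) ⬝ᵥ w) := by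
    have hstar : ∀ i, star (w i) = ∑ m, (v m : ℂ) * star (u m i) := by
      intro i
      rw [hw]
      simp only [star_sum, star_mul', Complex.star_def, Complex.conj_ofReal]
    calc star w ⬝ᵥ w = ∑ i, (∑ m, (v m : ℂ) * star (u m i)) * w i :=
          Finset.sum_congr rfl fun i _ => by rw [Pi.star_apply, hstar i]
      _ = ∑ i, ∑ m, (v m : ℂ) * (star (u m i) * w i) :=
          Finset.sum_congr rfl fun i _ => by
            rw [Finset.sum_mul]
            exact Finset.sum_congr rfl fun m _ => by ring
      _ = ∑ m, ∑ i, (v m : ℂ) * (star (u m i) * w i) := Finset.sum_comm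
      _ = ∑ m, (v m : ℂ) * (star (u m) ⬝ᵥ w) :=
          Finset.sum_congr rfl fun m _ => by
            rw [dotProduct, Finset.mul_sum]
            exact Finset.sum_congr rfl fun i _ => rfl
  have h1 : (star w ⬝ᵥ w).re = v ⬝ᵥ ((Matrix.of fun m n : Fin M =>
      (star (u m) ⬝ᵥ u n).re) *ᵥ v) := by
    rw [hsw]
    simp only [key]
    simp only [Complex.re_sum, Complex.re_ofReal_mul, dotProduct, mulVec,
      Matrix.of_apply]
    exact Finset.sum_congr rfl fun m _ => by
      rw [Finset.mul_sum, Finset.mul_sum]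
      exact Finset.sum_congr rfl fun n _ => by ring
  rw [hv0, dotProduct_zero] at h1
  have h2 : (star w ⬝ᵥ w).re = ∑ i, Complex.normSq (w i) := by
    simp only [dotProduct, Pi.star_apply, Complex.re_sum]
    apply Finset.sum_congr rfl; intro i _
    rw [Complex.star_def, mul_comm, Complex.mul_conj]
    simp
  have hw0 : w = 0 := by
    funext i
    have hnn : ∀ j ∈ Finset.univ, (0:ℝ) ≤ Complex.normSq (w j) :=
      fun j _ => Complex.normSq_nonneg _
    have hz : ∑ j, Complex.normSq (w j) = 0 := by rw [← h2, h1]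
    have := (Finset.sum_eq_zero_iff_of_nonneg hnn).mp hz i (Finset.mem_univ i)
    simpa using Complex.normSq_eq_zero.mp this
  have hAv : (Matrix.of fun m n : Fin M =>
      (star (u m) ⬝ᵥ u n).im) *ᵥ v = 0 := by
    funext m
    have hz : star (u m) ⬝ᵥ w = 0 := by rw [hw0]; simp
    have him : (∑ n, (v n : ℂ) * (star (u m) ⬝ᵥ u n)).im = 0 := by
      rw [← key m, hz]; simp
    simp only [Complex.im_sum, Complex.im_ofReal_mul] at him
    simpa [mulVec, dotProduct, mul_comm] using him
  have hdA : (Matrix.of fun m n : Fin M => (star (u m) ⬝ᵥ u n).im).det = 0 :=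
    Matrix.exists_mulVec_eq_zero_iff.mp ⟨v, hv, hAv⟩
  have hu2 := (Matrix.isUnit_iff_isUnit_det _).mp hA
  rw [hdA] at hu2
  simp at hu2
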